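/- For all t, p, k, q ∈ ℕ, (t! · C(k+t, t)) • T(p, k+t, q) = ∑_{(i,j,l)∈ℕ³, i+j+l=t} (−1)^{i+j} · (t!/(i!·j!·l!)) • A^l(T(p+i, k, q+j)), where C(k+t,t) denotes the binomial coefficient, t!/(i!·j!·l!) is the multinomial coefficient, and A^l denotes the l-fold iterate of the linear map A. -/

import Mathlib

open Finset

namespace InvRecAux

variable {W : Type*} [AddCommGroup W] [Module ℂ W]

/-- shift in `p`. -/
def shiftP : Module.End ℂ (ℕ → ℕ → W) where
  toFun F := fun p q => F (p + 1) q
  map_add' _ _ := rfl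
  map_smul' _ _ := rfl

/-- shift in `q`. -/
def shiftQ : Module.End ℂ (ℕ → ℕ → W) where
  toFun F := fun p q => F p (q + 1)
  map_add' _ _ := rfl
  map_smul' _ _ := rfl

/-- apply `A` pointwise. -/
def liftA (A : W →ₗ[ℂ] W) : Module.End ℂ (ℕ → ℕ → W) where
  toFun F := fun p q => A (F p q)
  map_add' F G := by funext p q; simp
  map_smul' c F := by funext p q; simp

lemma shiftP_pow (i : ℕ) (F : ℕ → ℕ → W) (p q : ℕ) :
    ((shiftP ^ i : Module.End ℂ (ℕ → ℕ → W))) F p q = F (p + i) q := by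
  induction i generalizing F with
  | zero => simp
  | succ n ih =>
    rw [pow_succ]
    show (shiftP ^ n) (shiftP F) p q = _
    rw [ih]
    show F (p + n + 1) q = F (p + (n + 1)) q
    rw [add_assoc]

lemma shiftQ_pow (j : ℕ) (F : ℕ → ℕ → W) (p q : ℕ) :
    ((shiftQ ^ j : Module.End ℂ (ℕ → ℕ → W))) F p q = F p (q + j) := by
  induction j generalizing F with
  | zero => simp
  | succ n ih =>
    rw [pow_succ]
    show (shiftQ ^ n) (shiftQ F) p q = _
    rw [ih]
    show F p (q + n + 1) = F p (q + (n + 1))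
    rw [add_assoc]

lemma liftA_pow (A : W →ₗ[ℂ] W) (l : ℕ) (F : ℕ → ℕ → W) (p q : ℕ) :
    ((liftA A ^ l)) F p q = (A ^ l) (F p q) := by
  induction l generalizing F with
  | zero => simp
  | succ n ih =>
    rw [pow_succ]
    show (liftA A ^ n) (liftA A F) p q = _
    rw [ih]
    show (A ^ n) (A (F p q)) = (A ^ (n + 1)) (F p q)
    rw [pow_succ]
    rfl

lemma commPQ : Commute (shiftP (W := W)) shiftQ := LinearMap.ext fun _ => rfl
lemma commAP (A : W →ₗ[ℂ] W) : Commute (liftA A) shiftP := LinearMap.ext fun _ => rfl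
lemma commAQ (A : W →ₗ[ℂ] W) : Commute (liftA A) shiftQ := LinearMap.ext fun _ => rfl

/-- arithmetic: `(k+1) * (n! * C(k+1+n, n)) = (n+1)! * C(k+n+1, n+1)`. -/
lemma fact_choose_succ (k n : ℕ) :
    (k + 1) * (n.factorial * (k + 1 + n).choose n) =
      (n + 1).factorial * (k + n + 1).choose (n + 1) := by
  apply Nat.eq_of_mul_eq_mul_right (Nat.factorial_pos k)
  have h1 : (k + 1 + n).choose n * n.factorial * (k + 1).factorial = (k + 1 + n).factorial := by
    have := Nat.add_choose_mul_factorial_mul_factorial (k + 1) n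
    calc (k + 1 + n).choose n * n.factorial * (k + 1).factorial
        = (k + 1 + n).choose n * (k + 1).factorial * n.factorial := by ring
      _ = (k + 1 + n).factorial := this
  have h2 : (k + n + 1).choose (n + 1) * (n + 1).factorial * k.factorial =
      (k + n + 1).factorial := by
    have := Nat.add_choose_mul_factorial_mul_factorial k (n + 1)
    calc (k + n + 1).choose (n + 1) * (n + 1).factorial * k.factorial
        = (k + (n + 1)).choose (n + 1) * k.factorial * (n + 1).factorial := by ring
      _ = (k + n + 1).factorial := by rw [this, show k + (n + 1) = k + n + 1 by omega]
  calc (k + 1) * (n.factorial * (k + 1 + n).choose n) * k.factorial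
      = (k + 1 + n).choose n * n.factorial * ((k + 1) * k.factorial) := by ring
    _ = (k + 1 + n).factorial := by rw [← Nat.factorial_succ]; exact h1
    _ = (k + n + 1).factorial := by rw [show k + 1 + n = k + n + 1 by omega]
    _ = (n + 1).factorial * (k + n + 1).choose (n + 1) * k.factorial := by rw [← h2]; ring

/-- multinomial as product of binomials. -/
lemma multinom_eq (i j l : ℕ) :
    (i + j + l).factorial / (i.factorial * j.factorial * l.factorial) =
      (i + j + l).choose (i + j) * ((i + j).choose i) := by
  have h1 : (i + j).choose i * i.factorial * j.factorial = (i + j).factorial := by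
    have := Nat.add_choose_mul_factorial_mul_factorial j i
    calc (i + j).choose i * i.factorial * j.factorial
        = (j + i).choose i * j.factorial * i.factorial := by rw [show j + i = i + j by omega]; ring
      _ = (i + j).factorial := by rw [this, show j + i = i + j by omega]
  have h2 : (i + j + l).choose (i + j) * (i + j).factorial * l.factorial =
      (i + j + l).factorial := by
    have := Nat.add_choose_mul_factorial_mul_factorial l (i + j)
    calc (i + j + l).choose (i + j) * (i + j).factorial * l.factorial
        = (l + (i + j)).choose (i + j) * l.factorial * (i + j).factorial := by
          rw [show l + (i + j) = i + j + l by omega]; ring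
      _ = (i + j + l).factorial := by rw [this, show l + (i + j) = i + j + l by omega]
  apply Nat.div_eq_of_eq_mul_left
  · positivity
  · calc (i + j + l).factorial
        = (i + j + l).choose (i + j) * (i + j).factorial * l.factorial := h2.symm
      _ = (i + j + l).choose (i + j) * ((i + j).choose i * i.factorial * j.factorial) *
            l.factorial := by rw [h1]
      _ = (i + j + l).choose (i + j) * (i + j).choose i *
            (i.factorial * j.factorial * l.factorial) := by ring

lemma N_pow_T (A : W →ₗ[ℂ] W) (T : ℕ → ℕ → ℕ → W)
    (hT : ∀ p k q, A (T p k q) = T (p + 1) k q + (k + 1) • T p (k + 1) q + T p k (q + 1))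
    (t k : ℕ) :
    (((liftA A - shiftP - shiftQ : Module.End ℂ (ℕ → ℕ → W))) ^ t) (fun p q => T p k q) =
      fun p q => (t.factorial * (k + t).choose t) • T p (k + t) q := by
  induction t generalizing k with
  | zero => simp
  | succ n ih =>
    have hN : (liftA A - shiftP - shiftQ : Module.End ℂ (ℕ → ℕ → W)) (fun p q => T p k q)
        = (k + 1) • fun p q => T p (k + 1) q := by
      funext p q
      show A (T p k q) - T (p + 1) k q - T p k (q + 1) = (k + 1) • T p (k + 1) q
      rw [hT p k q]; abel
    rw [pow_succ, Module.End.mul_apply, hN, map_nsmul, ih (k + 1)]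
    funext p q
    show (k + 1) • ((n.factorial * (k + 1 + n).choose n) • T p (k + 1 + n) q) = _
    rw [smul_smul, fact_choose_succ, show k + 1 + n = k + (n + 1) by omega,
      show k + n + 1 = k + (n + 1) by omega]

lemma N_pow_eq (A : W →ₗ[ℂ] W) (t : ℕ) :
    ((liftA A - shiftP - shiftQ) ^ t : Module.End ℂ (ℕ → ℕ → W)) =
      ∑ ml ∈ Finset.HasAntidiagonal.antidiagonal t, ∑ ij ∈ Finset.HasAntidiagonal.antidiagonal ml.1,
        (((-1 : ℤ) ^ ml.1 * (t.choose ml.1 * ml.1.choose ij.1 : ℕ)) •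
          (shiftP ^ ij.1 * shiftQ ^ ij.2 * liftA A ^ ml.2) : Module.End ℂ (ℕ → ℕ → W)) := by
  have hsplit : (liftA A - shiftP - shiftQ : Module.End ℂ (ℕ → ℕ → W)) =
      (-(shiftP + shiftQ)) + liftA A := by abel
  have hc : Commute (-(shiftP + shiftQ) : Module.End ℂ (ℕ → ℕ → W)) (liftA A) :=
    (((commAP A).symm.add_left (commAQ A).symm)).neg_left
  rw [hsplit, hc.add_pow']
  refine Finset.sum_congr rfl fun ml _ => ?_
  have hneg : ∀ m : ℕ, ((-(shiftP + shiftQ)) : Module.End ℂ (ℕ → ℕ → W)) ^ m =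
      (-1 : ℤ) ^ m • (shiftP + shiftQ) ^ m := by
    intro m
    induction m with
    | zero => simp
    | succ n ihn =>
      have hmn : (shiftP + shiftQ : Module.End ℂ (ℕ → ℕ → W)) ^ n * -(shiftP + shiftQ) =
          -((shiftP + shiftQ) ^ n * (shiftP + shiftQ)) :=
        LinearMap.ext fun F => map_neg ((shiftP + shiftQ : Module.End ℂ (ℕ → ℕ → W)) ^ n) _
      rw [pow_succ, ihn, smul_mul_assoc, hmn, smul_neg, ← neg_smul, ← pow_succ]
      congr 1
      ring
  rw [hneg, (commPQ (W := W)).add_pow']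
  simp only [smul_mul_assoc, Finset.sum_mul, Finset.smul_sum]
  refine Finset.sum_congr rfl fun ij _ => ?_
  rw [← Nat.cast_smul_eq_nsmul ℤ, ← Nat.cast_smul_eq_nsmul ℤ, smul_smul, smul_smul]
  congr 1
  push_cast
  ring

/-- reindexing of the antidiagonal-tuple sum as an iterated sum. -/
lemma tuple3_sum {M : Type*} [AddCommMonoid M] (t : ℕ) (f : ℕ → ℕ → ℕ → M) :
    ∑ x ∈ Finset.Nat.antidiagonalTuple 3 t, f (x 0) (x 1) (x 2) =
      ∑ ml ∈ Finset.HasAntidiagonal.antidiagonal t, ∑ ij ∈ Finset.HasAntidiagonal.antidiagonal ml.1,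
        f ij.1 ij.2 ml.2 := by
  rw [Finset.sum_sigma' (Finset.HasAntidiagonal.antidiagonal t) (fun ml => Finset.HasAntidiagonal.antidiagonal ml.1)
    (fun ml ij => f ij.1 ij.2 ml.2)]
  refine Finset.sum_nbij' (fun x => ⟨(x 0 + x 1, x 2), (x 0, x 1)⟩)
    (fun z => ![z.2.1, z.2.2, z.1.2]) ?_ ?_ ?_ ?_ ?_
  · intro x hx
    rw [Finset.Nat.mem_antidiagonalTuple, Fin.sum_univ_three] at hx
    simp only [Finset.mem_sigma, Finset.HasAntidiagonal.mem_antidiagonal]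
    exact ⟨hx, trivial⟩
  · intro z hz
    simp only [Finset.mem_sigma, Finset.HasAntidiagonal.mem_antidiagonal] at hz
    rw [Finset.Nat.mem_antidiagonalTuple, Fin.sum_univ_three]
    simp only [Matrix.cons_val_zero, Matrix.cons_val_one, Matrix.head_cons,
      Matrix.cons_val_two, Matrix.tail_cons]
    omega
  · intro x _
    funext i
    fin_cases i <;> rfl
  · intro z hz
    obtain ⟨⟨m, l⟩, i, j⟩ := z
    simp only [Finset.mem_sigma, Finset.HasAntidiagonal.mem_antidiagonal] at hz
    simp only [Matrix.cons_val_zero, Matrix.cons_val_one, Matrix.head_cons,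
      Matrix.cons_val_two, Matrix.tail_cons]
    rw [hz.2]
  · intro x _
    rfl

end InvRecAux

open InvRecAux in
/-- Formula (3.63): from the recursion
`A(T(p,k,q)) = T(p+1,k,q) + (k+1)•T(p,k+1,q) + T(p,k,q+1)` one has
`binom(k+t,t) t! • T(p,k+t,q) = ∑_{i+j+l=t} (-1)^{i+j} (t!/(i!j!l!)) • A^l(T(p+i,k,q+j))`. -/
theorem inverted_recursion_formula (W : Type*) [AddCommGroup W] [Module ℂ W]
    (A : W →ₗ[ℂ] W) (T : ℕ → ℕ → ℕ → W)
    (hT : ∀ p k q, A (T p k q) = T (p + 1) k q + (k + 1) • T p (k + 1) q + T p k (q + 1))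
    (t p k q : ℕ) :
    (t.factorial * (k + t).choose t) • T p (k + t) q =
      ∑ x ∈ Finset.Nat.antidiagonalTuple 3 t,
        ((-1 : ℤ) ^ (x 0 + x 1) *
          ((t.factorial / ((x 0).factorial * (x 1).factorial * (x 2).factorial) : ℕ) : ℤ)) •
          (A ^ (x 2 : ℕ)) (T (p + x 0) k (q + x 1)) := by
  have hkey := N_pow_T A T hT t k
  rw [N_pow_eq] at hkey
  have heval : (t.factorial * (k + t).choose t) • T p (k + t) q =
      ∑ ml ∈ Finset.HasAntidiagonal.antidiagonal t, ∑ ij ∈ Finset.HasAntidiagonal.antidiagonal ml.1,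
        (((-1 : ℤ) ^ ml.1 * (t.choose ml.1 * ml.1.choose ij.1 : ℕ)) •
          (A ^ ml.2) (T (p + ij.1) k (q + ij.2))) := by
    have := congrFun (congrFun hkey p) q
    rw [← this]
    simp only [LinearMap.sum_apply, Finset.sum_apply, LinearMap.smul_apply, Pi.smul_apply,
      Module.End.mul_apply]
    refine (Finset.sum_congr rfl fun ml _ => Finset.sum_congr rfl fun ij _ => ?_).symm
    congr 1
    rw [shiftP_pow, shiftQ_pow, liftA_pow]
  rw [heval, tuple3_sum t (fun i j l =>
    ((-1 : ℤ) ^ (i + j) *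
      ((t.factorial / (i.factorial * j.factorial * l.factorial) : ℕ) : ℤ)) •
      (A ^ l) (T (p + i) k (q + j)))]
  refine Finset.sum_congr rfl fun ml hml => Finset.sum_congr rfl fun ij hij => ?_
  rw [Finset.HasAntidiagonal.mem_antidiagonal] at hml hij
  congr 2
  · rw [hij]
  · rw [show t = ij.1 + ij.2 + ml.2 by omega, multinom_eq, hij]
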